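/- arXiv:2106.05676 — 11 statements merged into one kernel-verified Lean document; each statement's English description precedes it below -/
import Mathlib

section
/- Let α, β, δ be positive real numbers and define Tr = 2 - 2α(β+δ) + α²βδ. Set m = min{2/β, 2/δ} and M = max{2/β, 2/δ}, and suppose β ≠ δ. Then |Tr| = 2 if and only if α ∈ {m, M, m+M}; |Tr| < 2 if and only if α ∈ (0,m) ∪ (M, m+M); and |Tr| > 2 if and only if α ∈ (m,M) ∪ (m+M, ∞). -/
theorem stmt_0 (α β δ m M Tr : ℝ) (hα : 0 < α) (hβ : 0 < β) (hδ : 0 < δ)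
    (hne : β ≠ δ)
    (hm : m = min (2 / β) (2 / δ)) (hM : M = max (2 / β) (2 / δ))
    (hTr : Tr = 2 - 2 * α * (β + δ) + α ^ 2 * β * δ) :
    (|Tr| = 2 ↔ α = m ∨ α = M ∨ α = m + M) ∧
    (|Tr| < 2 ↔ α ∈ Set.Ioo 0 m ∪ Set.Ioo M (m + M)) ∧
    (2 < |Tr| ↔ α ∈ Set.Ioo m M ∪ Set.Ioi (m + M)) := by
  have hab : (2:ℝ)/β ≠ 2/δ := by
    intro h
    apply hne
    field_simp at h
    linarith
  have hmM : m < M := by rw [hm, hM]; exact min_lt_max.mpr hab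
  have hmpos : 0 < m := by
    rw [hm]
    exact lt_min (by positivity) (by positivity)
  have hsum : m + M = 2/β + 2/δ := by rw [hm, hM, min_add_max]
  have hpair : (m = 2/β ∧ M = 2/δ) ∨ (m = 2/δ ∧ M = 2/β) := by
    rcases le_total (2/β) (2/δ) with h | h
    · left; rw [hm, hM, min_eq_left h, max_eq_right h]; exact ⟨rfl, rfl⟩
    · right; rw [hm, hM, min_eq_right h, max_eq_left h]; exact ⟨rfl, rfl⟩
  have hβ0 := hβ.ne'
  have hδ0 := hδ.ne'
  have h2 : Tr + 2 = β * δ * ((α - m) * (α - M)) := by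
    rcases hpair with ⟨h1, h2⟩ | ⟨h1, h2⟩ <;> subst h1 h2 <;> rw [hTr] <;>
      field_simp <;> ring
  have h1 : Tr - 2 = α * (β * δ) * (α - (m + M)) := by
    rw [hsum, hTr]; field_simp; ring
  have hbd : 0 < β * δ := by positivity
  have habd : 0 < α * (β * δ) := mul_pos hα hbd
  refine ⟨?_, ?_, ?_⟩
  · rw [abs_eq (by norm_num : (0:ℝ) ≤ 2)]
    constructor
    · rintro (h | h)
      · right; right
        have : α * (β * δ) * (α - (m + M)) = 0 := by linarith
        rcases mul_eq_zero.mp this with h' | h'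
        · exact absurd h' habd.ne'
        · linarith
      · have : β * δ * ((α - m) * (α - M)) = 0 := by linarith
        rcases mul_eq_zero.mp this with h' | h'
        · exact absurd h' hbd.ne'
        · rcases mul_eq_zero.mp h' with h'' | h''
          · left; linarith
          · right; left; linarith
    · rintro (h | h | h) <;> subst h
      · right; nlinarith
      · right; nlinarith
      · left; nlinarith
  · rw [abs_lt]
    constructor
    · rintro ⟨hlo, hhi⟩
      have hR : α < m + M := by
        by_contra hcon
        push_neg at hcon
        have := mul_nonneg habd.le (by linarith : (0:ℝ) ≤ α - (m + M))
        linarith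
      have hPQ : 0 < (α - m) * (α - M) := by
        by_contra hcon
        push_neg at hcon
        have := mul_nonpos_of_nonneg_of_nonpos hbd.le hcon
        linarith
      by_cases hc : α < m
      · left; exact ⟨hα, hc⟩
      · right
        push_neg at hc
        have hQ : 0 < α - M := by
          by_contra hcon
          push_neg at hcon
          have := mul_nonpos_of_nonneg_of_nonpos (by linarith : (0:ℝ) ≤ α - m) hcon
          linarith
        exact ⟨by linarith, hR⟩
    · rintro (⟨h0, h1'⟩ | ⟨h0, h1'⟩)
      · have hp : 0 < (α - m) * (α - M) :=
          mul_pos_of_neg_of_neg (by linarith) (by linarith)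
        have h3 := mul_pos hbd hp
        have h4 := mul_neg_of_pos_of_neg habd (by linarith : α - (m + M) < 0)
        constructor <;> linarith
      · have hp : 0 < (α - m) * (α - M) :=
          mul_pos (by linarith) (by linarith)
        have h3 := mul_pos hbd hp
        have h4 := mul_neg_of_pos_of_neg habd (by linarith : α - (m + M) < 0)
        constructor <;> linarith
  · rw [lt_abs]
    constructor
    · rintro (h | h)
      · right
        simp only [Set.mem_Ioi]
        by_contra hcon
        push_neg at hcon
        have := mul_nonpos_of_nonneg_of_nonpos habd.le (by linarith : α - (m + M) ≤ 0)
        linarith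
      · left
        have hPQ : (α - m) * (α - M) < 0 := by
          by_contra hcon
          push_neg at hcon
          have := mul_nonneg hbd.le hcon
          linarith
        have hP : 0 < α - m := by
          by_contra hcon
          push_neg at hcon
          have : 0 ≤ (α - m) * (α - M) := by nlinarith
          linarith
        have hQ : α - M < 0 := by
          by_contra hcon
          push_neg at hcon
          have := mul_nonneg hP.le hcon
          linarith
        exact ⟨by linarith, by linarith⟩
    · rintro (⟨h0, h1'⟩ | h0)
      · right
        have := mul_neg_of_pos_of_neg hbd
          (mul_neg_of_pos_of_neg (by linarith : 0 < α - m) (by linarith : α - M < 0))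
        linarith
      · left
        simp only [Set.mem_Ioi] at h0
        have := mul_pos habd (by linarith : 0 < α - (m + M))
        linarith
end

section
/- Let α > 0, β > 0 and define Tr = 2 - 4αβ + α²β², i.e. the case δ = β in the trace formula, and set m = 2/β. Then |Tr| = 2 if and only if α = m or α = 2m; |Tr| < 2 if and only if α ∈ (0,m) ∪ (m,2m); and |Tr| > 2 if and only if α > 2m. -/
theorem stmt_1 (α β m Tr : ℝ) (hα : 0 < α) (hβ : 0 < β)
    (hm : m = 2 / β)
    (hTr : Tr = 2 - 4 * α * β + α ^ 2 * β ^ 2) :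
    (|Tr| = 2 ↔ α = m ∨ α = 2 * m) ∧
    (|Tr| < 2 ↔ α ∈ Set.Ioo 0 m ∪ Set.Ioo m (2 * m)) ∧
    (2 < |Tr| ↔ 2 * m < α) := by
  subst hm hTr
  have hβ' : β ≠ 0 := hβ.ne'
  set x := α * β with hx
  have hx0 : 0 < x := mul_pos hα hβ
  have e2 : α = 2 / β ↔ x = 2 := by rw [eq_div_iff hβ']
  have e4 : α = 2 * (2 / β) ↔ x = 4 := by
    rw [show (2 : ℝ) * (2 / β) = 4 / β by ring, eq_div_iff hβ']
  have l2 : α < 2 / β ↔ x < 2 := by rw [lt_div_iff₀ hβ]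
  have g2 : 2 / β < α ↔ 2 < x := by rw [div_lt_iff₀ hβ]
  have l4 : α < 2 * (2 / β) ↔ x < 4 := by
    rw [show (2 : ℝ) * (2 / β) = 4 / β by ring, lt_div_iff₀ hβ]
  have g4 : 2 * (2 / β) < α ↔ 4 < x := by
    rw [show (2 : ℝ) * (2 / β) = 4 / β by ring, div_lt_iff₀ hβ]
  have hT : 2 - 4 * α * β + α ^ 2 * β ^ 2 = 2 - 4 * x + x ^ 2 := by ring
  rw [hT]
  refine ⟨?_, ?_, ?_⟩
  · rw [abs_eq (by norm_num), e2, e4]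
    constructor
    · rintro (h | h)
      · rcases mul_eq_zero.1 (show x * (x - 4) = 0 by nlinarith) with h' | h'
        · exact absurd h' hx0.ne'
        · exact Or.inr (by linarith)
      · exact Or.inl (by nlinarith)
    · rintro (h | h) <;> rw [h] <;> norm_num
  · rw [abs_lt]
    constructor
    · rintro ⟨h1, h2⟩
      rcases lt_or_ge x 2 with h | h
      · exact Or.inl ⟨hα, l2.2 h⟩
      · refine Or.inr ⟨g2.2 ?_, l4.2 ?_⟩ <;> nlinarith
    · rintro (⟨h1, h2⟩ | ⟨h1, h2⟩)
      · have := l2.1 h2; constructor <;> nlinarith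
      · have := g2.1 h1; have := l4.1 h2; constructor <;> nlinarith
  · rw [lt_abs, g4]
    constructor
    · rintro (h | h)
      · nlinarith
      · nlinarith [sq_nonneg (x - 2)]
    · intro h; left; nlinarith
end

section
/- Let β > 0 and δ ≤ 0 with 2/β + 2/δ ≤ 0 (interpreting the condition as automatically holding when δ = 0). Then for α > 0, the quantity Tr = 2 - 2α(β+δ) + α²βδ satisfies |Tr| = 2 iff α = 2/β, |Tr| < 2 iff 0 < α < 2/β, and |Tr| > 2 iff α > 2/β. -/
theorem stmt_3 (β δ : ℝ) (hβ : 0 < β) (hδ : δ ≤ 0)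
    (h : δ = 0 ∨ 2 / β + 2 / δ ≤ 0) :
    ∀ α : ℝ, 0 < α →
      (|2 - 2 * α * (β + δ) + α ^ 2 * β * δ| = 2 ↔ α = 2 / β) ∧
      (|2 - 2 * α * (β + δ) + α ^ 2 * β * δ| < 2 ↔ α < 2 / β) ∧
      (2 < |2 - 2 * α * (β + δ) + α ^ 2 * β * δ| ↔ 2 / β < α) := by
  intro α hα
  have hβ0 : β ≠ 0 := hβ.ne'
  have hbd : 0 ≤ β + δ := by
    rcases h with h0 | h1
    · subst h0; linarith
    · by_cases hδ0 : δ = 0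
      · subst hδ0; linarith
      · have hδneg : δ < 0 := lt_of_le_of_ne hδ hδ0
        have hβδ : β * δ < 0 := mul_neg_of_pos_of_neg hβ hδneg
        have e : 2 / β + 2 / δ = (2 * δ + 2 * β) / (β * δ) := by
          field_simp
        rw [e] at h1
        have h2 : 0 ≤ (2 * δ + 2 * β) / (β * δ) * (β * δ) :=
          mul_nonneg_of_nonpos_of_nonpos h1 hβδ.le
        rw [div_mul_cancel₀ _ hβδ.ne] at h2
        linarith
  set T : ℝ := 2 - 2 * α * (β + δ) + α ^ 2 * β * δ with hT
  have hfac : T + 2 = (2 - α * β) * (2 - α * δ) := by rw [hT]; ring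
  have hδ' : 0 < 2 - α * δ := by nlinarith [mul_nonneg hα.le (neg_nonneg.mpr hδ)]
  have hlt : T < 2 := by
    by_cases hδ0 : δ = 0
    · subst hδ0; rw [hT]; nlinarith [mul_pos hα hβ]
    · have hδneg : δ < 0 := lt_of_le_of_ne hδ hδ0
      have h1 : 0 ≤ α * (β + δ) := mul_nonneg hα.le hbd
      have h2 : 0 < α ^ 2 * β * (-δ) := by
        have : 0 < -δ := by linarith
        positivity
      rw [hT]; nlinarith
  have heq : T = -2 ↔ α = 2 / β := by
    constructor
    · intro hE
      have h0 : (2 - α * β) * (2 - α * δ) = 0 := by linarith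
      rcases mul_eq_zero.mp h0 with h0 | h0
      · field_simp
        linarith
      · linarith
    · intro hE
      have h0 : 2 - α * β = 0 := by rw [hE]; field_simp; norm_num
      rw [h0, zero_mul] at hfac
      linarith
  have hgt0 : -2 < T ↔ α < 2 / β := by
    rw [lt_div_iff₀ hβ]
    constructor
    · intro hE
      have h0 : 0 < (2 - α * β) * (2 - α * δ) := by linarith
      nlinarith
    · intro hE
      nlinarith [mul_pos (by linarith : (0:ℝ) < 2 - α * β) hδ']
  have hlt0 : T < -2 ↔ 2 / β < α := by
    rw [div_lt_iff₀ hβ]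
    constructor
    · intro hE
      have h0 : (2 - α * β) * (2 - α * δ) < 0 := by linarith
      nlinarith
    · intro hE
      nlinarith [mul_pos (by linarith : (0:ℝ) < α * β - 2) hδ']
  refine ⟨?_, ?_, ?_⟩
  · rw [← heq, abs_eq (by norm_num : (0:ℝ) ≤ 2)]
    constructor
    · rintro (h2 | h2)
      · linarith
      · exact h2
    · intro h2; exact Or.inr h2
  · rw [← hgt0, abs_lt]
    exact ⟨fun h2 => h2.1, fun h2 => ⟨h2, hlt⟩⟩
  · rw [← hlt0, lt_abs]
    constructor
    · rintro (h2 | h2)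
      · linarith
      · linarith
    · intro h2; exact Or.inr (by linarith)
end

section
/- Let β > 0, δ < 0 with 2/β + 2/δ > 0, and let Tr = 2 - 2α(β+δ) + α²βδ for α > 0. Then |Tr| = 2 iff α = 2/β or α = 2/β + 2/δ; |Tr| < 2 iff α ∈ (2/β + 2/δ, 2/β); and |Tr| > 2 iff α ∈ (0, 2/β + 2/δ) ∪ (2/β, ∞). -/
theorem stmt_4 (β δ : ℝ) (hβ : 0 < β) (hδ : δ < 0)
    (h : 0 < 2 / β + 2 / δ) :
    ∀ α : ℝ, 0 < α →
      (|2 - 2 * α * (β + δ) + α ^ 2 * β * δ| = 2 ↔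
        α = 2 / β ∨ α = 2 / β + 2 / δ) ∧
      (|2 - 2 * α * (β + δ) + α ^ 2 * β * δ| < 2 ↔
        α ∈ Set.Ioo (2 / β + 2 / δ) (2 / β)) ∧
      (2 < |2 - 2 * α * (β + δ) + α ^ 2 * β * δ| ↔
        α ∈ Set.Ioo 0 (2 / β + 2 / δ) ∪ Set.Ioi (2 / β)) := by
  intro α hα
  have hβ' : β ≠ 0 := ne_of_gt hβ
  have hδ' : δ ≠ 0 := ne_of_lt hδ
  have hd2 : 2 / δ < 0 := div_neg_of_pos_of_neg (by norm_num) hδ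
  have hb2 : 0 < 2 / β := div_pos (by norm_num) hβ
  have hs : 2 / β + 2 / δ < 2 / β := by linarith
  set T := 2 - 2 * α * (β + δ) + α ^ 2 * β * δ with hT
  have hbd : β * δ < 0 := mul_neg_of_pos_of_neg hβ hδ
  have hbda : β * δ * α < 0 := mul_neg_of_neg_of_pos hbd hα
  have hTm : T - 2 = β * δ * α * (α - (2 / β + 2 / δ)) := by
    field_simp [hT]; ring
  have hTp : T + 2 = β * δ * (α - 2 / β) * (α - 2 / δ) := by
    field_simp [hT]; ring
  have hαd : 0 < α - 2 / δ := by linarith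
  simp only [Set.mem_Ioo, Set.mem_Ioi, Set.mem_union]
  rcases lt_trichotomy α (2 / β + 2 / δ) with h1 | h1 | h1
  · -- α < s : T > 2
    have hx : 0 < β * δ * α * (α - (2 / β + 2 / δ)) :=
      mul_pos_of_neg_of_neg hbda (by linarith)
    have hT2 : 2 < T := by linarith
    have habs : |T| = T := abs_of_pos (by linarith)
    refine ⟨⟨fun he => ?_, fun hc => ?_⟩, ⟨fun he => ?_, fun hc => ?_⟩,
      fun _ => Or.inl ⟨hα, h1⟩, fun _ => by rw [habs]; exact hT2⟩
    · rw [habs] at he; linarith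
    · rcases hc with hc | hc <;> linarith
    · rw [habs] at he; linarith
    · linarith [hc.1]
  · -- α = s : T = 2
    have hT2 : T = 2 := by
      have : T - 2 = 0 := by rw [hTm, h1]; ring
      linarith
    refine ⟨⟨fun _ => Or.inr h1, fun _ => by rw [hT2]; norm_num⟩,
      ⟨fun he => ?_, fun hc => ?_⟩, ⟨fun he => ?_, fun hc => ?_⟩⟩
    · rw [hT2] at he; norm_num at he
    · linarith [hc.1]
    · rw [hT2] at he; norm_num at he
    · rcases hc with hc | hc <;> [linarith [hc.2]; linarith]
  · -- α > s
    rcases lt_trichotomy α (2 / β) with h2 | h2 | h2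
    · -- s < α < 2/β : -2 < T < 2
      have hx : β * δ * α * (α - (2 / β + 2 / δ)) < 0 :=
        mul_neg_of_neg_of_pos hbda (by linarith)
      have hy : 0 < β * δ * (α - 2 / β) * (α - 2 / δ) :=
        mul_pos (mul_pos_of_neg_of_neg hbd (by linarith)) hαd
      have hTa : T < 2 := by linarith
      have hTb : -2 < T := by linarith
      have habs : |T| < 2 := abs_lt.mpr ⟨hTb, hTa⟩
      refine ⟨⟨fun he => by linarith, fun hc => ?_⟩,
        ⟨fun _ => ⟨h1, h2⟩, fun _ => habs⟩,
        ⟨fun he => by linarith, fun hc => ?_⟩⟩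
      · rcases hc with hc | hc <;> linarith
      · rcases hc with hc | hc
        · linarith [hc.2]
        · linarith
    · -- α = 2/β : T = -2
      have hT2 : T = -2 := by
        have : T + 2 = 0 := by rw [hTp, h2]; ring
        linarith
      refine ⟨⟨fun _ => Or.inl h2, fun _ => by rw [hT2]; norm_num⟩,
        ⟨fun he => ?_, fun hc => ?_⟩, ⟨fun he => ?_, fun hc => ?_⟩⟩
      · rw [hT2] at he; norm_num at he
      · linarith [hc.2]
      · rw [hT2] at he; norm_num at he
      · rcases hc with hc | hc <;> [linarith [hc.2]; linarith]
    · -- α > 2/β : T < -2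
      have hy : β * δ * (α - 2 / β) * (α - 2 / δ) < 0 :=
        mul_neg_of_neg_of_pos (mul_neg_of_neg_of_pos hbd (by linarith)) hαd
      have hT2 : T < -2 := by linarith
      have habs : |T| = -T := abs_of_neg (by linarith)
      refine ⟨⟨fun he => ?_, fun hc => ?_⟩, ⟨fun he => ?_, fun hc => ?_⟩,
        fun _ => Or.inr h2, fun _ => by rw [habs]; linarith⟩
      · rw [habs] at he; linarith
      · rcases hc with hc | hc <;> linarith
      · rw [habs] at he; linarith
      · linarith [hc.2]
end

section
/- In the circle of radius R with Larmor radius 0 < μ < R, the symmetric 2-periodic inverse magnetic billiard trajectory has α = 2m where m = 2/β (with all four angles θᵢ equal, β = δ = 2 cot θ₀). Concretely, if cos θ₀ = μ/R and ℓ₁ = 2√(R² − μ²), then ℓ₁/μ = 2 tan θ₀, and consequently Tr S₂ = 2 - 4αβ + α²β² = 2, so the trajectory is parabolic. -/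
open Real

theorem stmt_6 (R μ θ₀ ℓ₁ α β : ℝ) (hμ : 0 < μ) (hμR : μ < R)
    (hθ : θ₀ ∈ Set.Ioo 0 (π / 2))
    (hcos : Real.cos θ₀ = μ / R)
    (hℓ : ℓ₁ = 2 * Real.sqrt (R ^ 2 - μ ^ 2))
    (hα : α = ℓ₁ / μ) (hβ : β = 2 * (Real.cos θ₀ / Real.sin θ₀)) :
    ℓ₁ / μ = 2 * Real.tan θ₀ ∧ α = 2 * (2 / β) ∧
    2 - 4 * α * β + α ^ 2 * β ^ 2 = 2 := by
  obtain ⟨h0, h2⟩ := hθ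
  have hR : 0 < R := lt_trans hμ hμR
  have hsinpos : 0 < Real.sin θ₀ := Real.sin_pos_of_pos_of_lt_pi h0 (lt_trans h2 (by linarith [Real.pi_pos]))
  have hsin : Real.sin θ₀ = Real.sqrt (R ^ 2 - μ ^ 2) / R := by
    have h1 : Real.sin θ₀ ^ 2 = 1 - Real.cos θ₀ ^ 2 := by
      have := Real.sin_sq_add_cos_sq θ₀; linarith
    have hsub : (0:ℝ) ≤ R ^ 2 - μ ^ 2 := by nlinarith
    have : Real.sin θ₀ ^ 2 = (Real.sqrt (R ^ 2 - μ ^ 2) / R) ^ 2 := by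
      rw [h1, hcos, div_pow, div_pow, Real.sq_sqrt hsub]
      field_simp
    have hrhs : 0 ≤ Real.sqrt (R ^ 2 - μ ^ 2) / R := div_nonneg (Real.sqrt_nonneg _) hR.le
    nlinarith [hsinpos]
  have htan : Real.tan θ₀ = Real.sqrt (R ^ 2 - μ ^ 2) / μ := by
    rw [Real.tan_eq_sin_div_cos, hsin, hcos]
    field_simp
  have hsqrtpos : 0 < Real.sqrt (R ^ 2 - μ ^ 2) := Real.sqrt_pos.mpr (by nlinarith)
  have h1 : ℓ₁ / μ = 2 * Real.tan θ₀ := by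
    rw [hℓ, htan]; ring
  refine ⟨h1, ?_, ?_⟩
  · have hβ' : β = 2 / Real.tan θ₀ := by
      have hcospos : 0 < Real.cos θ₀ := by rw [hcos]; positivity
      rw [hβ, Real.tan_eq_sin_div_cos]
      field_simp
    have htanpos : 0 < Real.tan θ₀ := by rw [htan]; positivity
    rw [hα, h1, hβ']
    field_simp
  · have hαβ : α * β = 4 := by
      rw [hα, h1, hβ, htan, hsin, hcos]
      field_simp
      ring
    nlinarith [hαβ]
end

section
/- For the ellipse x²/a² + y²/b² = 1 with a > b > 0 and Larmor radius 0 < μ < b, define α = (2a√(b² − μ²))/(bμ) and β = (2aμ)/(b√(b² − μ²)). Then α·β = 4a²/b², i.e. α = (a²/b²)·(4/β), and since a > b, α > 2·(2/β); hence Tr = 2 - 4αβ + α²β² > 2. -/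
theorem stmt_7 (a b μ α β : ℝ) (hb : 0 < b) (hab : b < a)
    (hμ : 0 < μ) (hμb : μ < b)
    (hα : α = 2 * a * Real.sqrt (b ^ 2 - μ ^ 2) / (b * μ))
    (hβ : β = 2 * a * μ / (b * Real.sqrt (b ^ 2 - μ ^ 2))) :
    α * β = 4 * a ^ 2 / b ^ 2 ∧ α = a ^ 2 / b ^ 2 * (4 / β) ∧
    2 * (2 / β) < α ∧
    2 < 2 - 4 * α * β + α ^ 2 * β ^ 2 := by
  have ha : 0 < a := hb.trans hab
  have hpos : 0 < b ^ 2 - μ ^ 2 := by nlinarith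
  have hs : 0 < Real.sqrt (b ^ 2 - μ ^ 2) := Real.sqrt_pos.mpr hpos
  have hs2 : Real.sqrt (b ^ 2 - μ ^ 2) ^ 2 = b ^ 2 - μ ^ 2 :=
    Real.sq_sqrt hpos.le
  set s := Real.sqrt (b ^ 2 - μ ^ 2)
  have hβpos : 0 < β := by
    rw [hβ]; positivity
  have h1 : α * β = 4 * a ^ 2 / b ^ 2 := by
    rw [hα, hβ]
    field_simp
    nlinarith [hs2]
  have h2 : α = a ^ 2 / b ^ 2 * (4 / β) := by
    field_simp at h1 ⊢
    nlinarith [h1]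
  have hb2 : b ^ 2 < a ^ 2 := by nlinarith
  have h3 : 2 * (2 / β) < α := by
    rw [h2]
    have h4 : 0 < 4 / β := by positivity
    have : (1 : ℝ) < a ^ 2 / b ^ 2 := by
      rw [lt_div_iff₀ (by positivity)]; linarith
    have he : 2 * (2 / β) = 1 * (4 / β) := by ring
    rw [he]
    exact mul_lt_mul_of_pos_right this h4
  have h4 : 4 < α * β := by
    rw [h1, lt_div_iff₀ (by positivity)]; nlinarith
  refine ⟨h1, h2, h3, ?_⟩
  nlinarith [h4]
end

section
/- For the ellipse x²/a² + y²/b² = 1 with a > b > 0 and Larmor radius 0 < μ < a, the minor-axis-aligned 2-periodic trajectory has α = (b²/a²)·(4/β) with β > 0, where α = (2b√(a² − μ²))/(aμ) and β = (2bμ)/(a√(a² − μ²)). Consequently Tr = 2 - 4αβ + α²β² satisfies |Tr| < 2 if and only if a² ≠ 2b², and |Tr| = 2 if and only if a² = 2b². -/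
theorem stmt_8 (a b μ α β : ℝ) (hb : 0 < b) (hab : b < a)
    (hμ : 0 < μ) (hμa : μ < a)
    (hα : α = 2 * b * Real.sqrt (a ^ 2 - μ ^ 2) / (a * μ))
    (hβ : β = 2 * b * μ / (a * Real.sqrt (a ^ 2 - μ ^ 2))) :
    α = b ^ 2 / a ^ 2 * (4 / β) ∧ 0 < β ∧
    (|2 - 4 * α * β + α ^ 2 * β ^ 2| < 2 ↔ a ^ 2 ≠ 2 * b ^ 2) ∧
    (|2 - 4 * α * β + α ^ 2 * β ^ 2| = 2 ↔ a ^ 2 = 2 * b ^ 2) := by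
  have ha : 0 < a := hb.trans hab
  have hsq : 0 < a ^ 2 - μ ^ 2 := by nlinarith
  set s := Real.sqrt (a ^ 2 - μ ^ 2) with hs
  clear_value s
  have hs0 : 0 < s := by rw [hs]; exact Real.sqrt_pos.mpr hsq
  have hs2 : s ^ 2 = a ^ 2 - μ ^ 2 := by rw [hs]; exact Real.sq_sqrt hsq.le
  have hβ0 : 0 < β := by rw [hβ]; positivity
  have hab2 : α * β = 4 * b ^ 2 / a ^ 2 := by
    rw [hα, hβ]; field_simp; ring
  have heq : α = b ^ 2 / a ^ 2 * (4 / β) := by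
    field_simp at hab2 ⊢
    nlinarith
  have hab2' : α * β = 4 * b ^ 2 / a ^ 2 := by
    rw [hα, hβ]; field_simp; ring
  have ht0 : 0 < α * β := by rw [hab2']; positivity
  have ht4 : α * β < 4 := by
    rw [hab2', div_lt_iff₀ (by positivity)]; nlinarith
  have h2 : (α * β = 2) ↔ a ^ 2 = 2 * b ^ 2 := by
    rw [hab2', div_eq_iff (by positivity : (a:ℝ) ^ 2 ≠ 0)]
    constructor <;> intro h <;> nlinarith
  have hexpr : 2 - 4 * α * β + α ^ 2 * β ^ 2 = (α * β - 2) ^ 2 - 2 := by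
    ring
  have hlt4 : (α * β - 2) ^ 2 < 4 := by nlinarith
  refine ⟨heq, hβ0, ?_, ?_⟩
  · rw [hexpr, ne_eq, ← h2, abs_lt]
    constructor
    · rintro ⟨h1, _⟩ h
      nlinarith
    · intro hne
      have h0' : 0 < (α * β - 2) ^ 2 :=
        lt_of_le_of_ne (sq_nonneg _) (Ne.symm (pow_ne_zero 2 (sub_ne_zero.mpr hne)))
      constructor <;> linarith
  · rw [hexpr, ← h2, abs_eq (by norm_num : (0:ℝ) ≤ 2)]
    constructor
    · rintro (h | h)
      · linarith
      · have h0 : (α * β - 2) ^ 2 = 0 := by linarith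
        have := pow_eq_zero_iff (n := 2) (by norm_num) |>.mp h0
        linarith
    · intro h
      right
      rw [h]
      norm_num
end

section
/- Let k ≥ 2 be an integer, α = 2(1 − μ^{2k})^{1/(2k)}/μ and β = 2(μ^{−2k} − 1)^{(1−2k)/(2k)} for 0 < μ < 1, and m = 2/β. Then α = m if and only if μ = (2^{k/(k−1)} + 1)^{−1/(2k)}, and α = 2m if and only if μ = 2^{−1/(2k)}. -/
lemma rpow_eq_iff_aux {s c a : ℝ} (hs : 0 < s) (hc : 0 < c) (ha : a ≠ 0) :
    s ^ a = c ↔ s = c ^ a⁻¹ := by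
  constructor
  · intro h
    have h2 : (s ^ a) ^ a⁻¹ = c ^ a⁻¹ := by rw [h]
    rwa [← Real.rpow_mul hs.le, mul_inv_cancel₀ ha, Real.rpow_one] at h2
  · intro h
    rw [h, ← Real.rpow_mul hc.le, inv_mul_cancel₀ ha, Real.rpow_one]

lemma mu_eq_aux {μ C : ℝ} {n : ℕ} (hμ : 0 < μ) (hn : n ≠ 0) (hC : 0 < C) :
    (1 - μ ^ n) / μ ^ n = C ↔ μ = (C + 1) ^ (-((n : ℝ))⁻¹) := by
  have ht0 : (0:ℝ) < μ ^ n := pow_pos hμ n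
  have hC1 : (0:ℝ) < C + 1 := by linarith
  have hnR : ((n:ℝ)) ≠ 0 := Nat.cast_ne_zero.mpr hn
  have step1 : (1 - μ ^ n) / μ ^ n = C ↔ μ ^ n = (C + 1)⁻¹ := by
    rw [div_eq_iff ht0.ne', inv_eq_one_div, eq_div_iff hC1.ne']
    constructor <;> intro h <;> nlinarith
  rw [step1]
  constructor
  · intro h
    rw [← Real.pow_rpow_inv_natCast hμ.le hn, h, Real.inv_rpow hC1.le,
      ← Real.rpow_neg hC1.le]
  · intro h
    rw [h, ← Real.rpow_natCast ((C+1) ^ (-((n:ℝ))⁻¹)) n, ← Real.rpow_mul hC1.le]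
    rw [show -((n:ℝ))⁻¹ * n = -1 by field_simp, Real.rpow_neg_one]

theorem stmt_10 (k : ℕ) (hk : 2 ≤ k) (μ α β m : ℝ) (hμ : 0 < μ) (hμ1 : μ < 1)
    (hα : α = 2 * (1 - μ ^ (2 * k)) ^ ((1 : ℝ) / (2 * k)) / μ)
    (hβ : β = 2 * ((μ ^ (2 * k))⁻¹ - 1) ^ ((1 - 2 * (k : ℝ)) / (2 * k)))
    (hm : m = 2 / β) :
    (α = m ↔ μ = ((2 : ℝ) ^ ((k : ℝ) / (k - 1)) + 1) ^ (-(1 : ℝ) / (2 * k))) ∧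
    (α = 2 * m ↔ μ = (2 : ℝ) ^ (-(1 : ℝ) / (2 * k))) := by
  have hkR : (2:ℝ) ≤ (k:ℝ) := by exact_mod_cast hk
  set n : ℕ := 2 * k with hn
  have hn0 : n ≠ 0 := by omega
  have hNR : ((n:ℝ)) = 2 * (k:ℝ) := by push_cast [hn]; ring
  set N : ℝ := (n : ℝ) with hNdef
  have hN0 : (0:ℝ) < N := by rw [hNR]; linarith
  have hN2 : (2:ℝ) < N := by rw [hNR]; linarith
  set t : ℝ := μ ^ n with htdef
  have ht0 : 0 < t := pow_pos hμ n
  have ht1 : t < 1 := pow_lt_one₀ hμ.le hμ1 hn0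
  set s : ℝ := (1 - t) / t with hsdef
  have hs0 : 0 < s := div_pos (by linarith) ht0
  -- α in terms of s
  have hμt : (t : ℝ) ^ (N⁻¹) = μ := Real.pow_rpow_inv_natCast hμ.le hn0
  have hαs : α = 2 * s ^ (N⁻¹) := by
    rw [hα, show (1:ℝ) / (2 * (k:ℝ)) = N⁻¹ by rw [hNR, one_div]]
    rw [hsdef, Real.div_rpow (by linarith) ht0.le, hμt]
    ring
  -- m in terms of s
  have hms : m = s ^ ((N - 1) / N) := by
    have h1 : (μ ^ (2 * k))⁻¹ - 1 = s := by
      rw [hsdef, sub_div, div_self ht0.ne', one_div, htdef, hn]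
    have h2 : (1 - 2 * (k:ℝ)) / (2 * k) = -((N - 1) / N) := by
      rw [hNR]; field_simp; ring
    rw [hm, hβ, h1, h2, Real.rpow_neg hs0.le]
    have h3 : (0:ℝ) < s ^ ((N - 1) / N) := Real.rpow_pos_of_pos hs0 _
    field_simp
  -- key reduction
  set a : ℝ := (N - 2) / N with hadef
  have ha0 : a ≠ 0 := (div_pos (by linarith) hN0).ne'
  have hdiv : s ^ ((N - 1) / N) / s ^ (N⁻¹) = s ^ a := by
    rw [← Real.rpow_sub hs0, hadef]
    congr 1
    field_simp
    ring
  have hainv : a⁻¹ = (k:ℝ) / ((k:ℝ) - 1) := by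
    rw [hadef, hNR]
    rw [inv_div]
    rw [div_eq_div_iff (by linarith) (by linarith)]
    ring
  have hexp : -(1:ℝ) / (2 * (k:ℝ)) = -(N⁻¹) := by
    rw [hNR]; field_simp
  constructor
  · -- part 1
    have hC : (0:ℝ) < (2:ℝ) ^ ((k:ℝ) / ((k:ℝ) - 1)) := Real.rpow_pos_of_pos two_pos _
    rw [hαs, hms]
    rw [show (2 * s ^ (N⁻¹) = s ^ ((N - 1) / N)) ↔ s ^ a = 2 from by
      rw [← hdiv, eq_comm, div_eq_iff (Real.rpow_pos_of_pos hs0 _).ne', eq_comm]]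
    rw [rpow_eq_iff_aux hs0 two_pos ha0, hainv, hexp]
    exact mu_eq_aux hμ hn0 hC
  · -- part 2
    rw [hαs, hms, mul_right_inj' (two_ne_zero)]
    rw [show (s ^ (N⁻¹) = s ^ ((N - 1) / N)) ↔ s ^ a = 1 from by
      rw [← hdiv, eq_comm, div_eq_one_iff_eq (Real.rpow_pos_of_pos hs0 _).ne', eq_comm]]
    rw [rpow_eq_iff_aux hs0 one_pos ha0, Real.one_rpow]
    rw [hexp, show (2:ℝ) = 1 + 1 by norm_num]
    exact mu_eq_aux hμ hn0 one_pos
end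

section
/- Let k ≥ 2 be an integer. For x, y > 0 with y > x (extended appropriately to x ∈ (−2^{−1/(2k)}, 2^{−1/(2k)}) with y = (1 − x^{2k})^{1/(2k)}), define f_k(x,y) = (Σ_{j=0}^{2k−2} y^{2k−2−j} x^{j}) / (Σ_{j=0}^{2k−2} (−1)^j y^{2k−2−j} x^{j}). Then along the curve y = (1 − x^{2k})^{1/(2k)}, the function x ↦ f_k(x, y(x)) is continuous and strictly monotone increasing on (−2^{−1/(2k)}, 2^{−1/(2k)}), satisfies f_k(0,1) = 1, and has limits 1/(2k−1) as x → −2^{−1/(2k)} and 2k−1 as x → 2^{−1/(2k)}. -/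
open Real Filter

noncomputable def auxP (n : ℕ) : ℝ → ℝ := fun s => ∑ i ∈ Finset.range n, s ^ i

noncomputable def auxD (n : ℕ) : ℝ → ℝ := fun s => ∑ i ∈ Finset.range n, (i : ℝ) * s ^ (i - 1)

lemma auxP_cont (n : ℕ) : Continuous (auxP n) :=
  continuous_finset_sum _ (fun i _ => continuous_pow i)

lemma auxP_hasDeriv (n : ℕ) (s : ℝ) : HasDerivAt (auxP n) (auxD n s) s :=
  HasDerivAt.fun_sum (fun i _ => hasDerivAt_pow i s)

lemma aux_P_pos (n : ℕ) (hn : 0 < n) (s : ℝ) (hs : |s| < 1) : 0 < auxP n s := by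
  unfold auxP
  have h1 : (∑ i ∈ Finset.range n, s ^ i) * (s - 1) = s ^ n - 1 := geom_sum_mul s n
  have h2 : s ^ n < 1 := by
    calc s ^ n ≤ |s ^ n| := le_abs_self _
    _ = |s| ^ n := by rw [abs_pow]
    _ < 1 := pow_lt_one₀ (abs_nonneg s) hs (by omega)
  have h3 : s - 1 < 0 := by have := (abs_lt.mp hs).2; linarith
  nlinarith

lemma aux_sum_gt (k : ℕ) (hk : 2 ≤ k) (u : ℝ) (hu : 0 ≤ u) (hu1 : u < 1) :
    (2 * (k : ℝ) - 1) * u ^ (k - 1) < ∑ i ∈ Finset.range (2 * k - 1), u ^ i := by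
  have hsplit : ∑ i ∈ Finset.range (2 * k - 1), u ^ i
      = (∑ i ∈ Finset.range (k - 1), u ^ i) + ∑ i ∈ Finset.range k, u ^ ((k-1) + i) := by
    have h : 2 * k - 1 = (k - 1) + k := by omega
    rw [h, Finset.sum_range_add]
  have hrefl : ∑ i ∈ Finset.range k, u ^ ((k-1) + i)
      = ∑ i ∈ Finset.range k, u ^ (2*k - 2 - i) := by
    rw [← Finset.sum_range_reflect]
    apply Finset.sum_congr rfl
    intro i hi
    simp only [Finset.mem_range] at hi
    congr 1
    omega
  have hpeel : ∑ i ∈ Finset.range k, u ^ (2*k - 2 - i)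
      = (∑ i ∈ Finset.range (k-1), u ^ (2*k - 2 - i)) + u ^ (k - 1) := by
    have h : k = (k - 1) + 1 := by omega
    rw [h, Finset.sum_range_succ]
    congr 2
    omega
  have hpair : ∀ i ∈ Finset.range (k-1), 2 * u ^ (k-1) ≤ u ^ i + u ^ (2*k-2-i) := by
    intro i hi
    simp only [Finset.mem_range] at hi
    set d := k - 1 - i with hd
    have e1 : 2*k - 2 - i = i + d * 2 := by omega
    have e2 : k - 1 = i + d := by omega
    rw [e1, e2, pow_add, pow_add, pow_mul]
    nlinarith [sq_nonneg (1 - u ^ d), pow_nonneg hu i, pow_nonneg hu d]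
  have hstrict : 2 * u ^ (k-1) < u ^ 0 + u ^ (2*k-2-0) := by
    have e1 : 2*k - 2 - 0 = (k - 1) * 2 := by omega
    have hlt : u ^ (k-1) < 1 := pow_lt_one₀ hu hu1 (by omega)
    rw [e1, pow_mul, pow_zero]
    nlinarith [sq_nonneg (1 - u ^ (k-1))]
  have hsum_lt : ∑ i ∈ Finset.range (k-1), 2 * u ^ (k-1)
      < ∑ i ∈ Finset.range (k-1), (u ^ i + u ^ (2*k-2-i)) := by
    apply Finset.sum_lt_sum hpair
    exact ⟨0, Finset.mem_range.mpr (by omega), hstrict⟩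
  have hcard : ∑ i ∈ Finset.range (k-1), 2 * u ^ (k-1) = ((k:ℝ) - 1) * (2 * u ^ (k-1)) := by
    rw [Finset.sum_const, Finset.card_range, nsmul_eq_mul]
    congr 1
    push_cast [Nat.cast_sub (by omega : 1 ≤ k)]
    ring
  have hsum_sum : ∑ i ∈ Finset.range (k-1), (u ^ i + u ^ (2*k-2-i))
      = (∑ i ∈ Finset.range (k-1), u ^ i) + ∑ i ∈ Finset.range (k-1), u ^ (2*k-2-i) :=
    Finset.sum_add_distrib
  rw [hsplit, hrefl, hpeel]
  nlinarith [hsum_lt, hcard, hsum_sum]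

lemma auxE (n : ℕ) (s : ℝ) : auxD n s * (s - 1) + auxP n s = n * s ^ (n - 1) := by
  have h1 : HasDerivAt (fun s => auxP n s * (s - 1)) (auxD n s * (s - 1) + auxP n s * 1) s :=
    (auxP_hasDeriv n s).mul ((hasDerivAt_id s).sub_const 1)
  have heq : (fun s : ℝ => auxP n s * (s - 1)) = fun s : ℝ => s ^ n - 1 :=
    funext fun u => geom_sum_mul u n
  rw [heq] at h1
  have h2 : HasDerivAt (fun s : ℝ => s ^ n - 1) ((n : ℝ) * s ^ (n - 1)) s :=
    (hasDerivAt_pow n s).sub_const 1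
  have := h1.unique h2
  linarith [this]

lemma auxW_pos (k : ℕ) (hk : 2 ≤ k) (s : ℝ) (hs : s ∈ Set.Ioo (-1 : ℝ) 1) :
    0 < auxD (2*k-1) s * auxP (2*k-1) (-s) + auxP (2*k-1) s * auxD (2*k-1) (-s) := by
  obtain ⟨hs1, hs2⟩ := hs
  set n := 2*k-1 with hn
  have hodd : Odd n := ⟨k - 1, by omega⟩
  have heven : Even (n - 1) := ⟨k - 1, by omega⟩
  have h1 : auxD n s * (s - 1) + auxP n s = n * s ^ (n - 1) := auxE n s
  have h2 : auxD n (-s) * (-s - 1) + auxP n (-s) = n * s ^ (n - 1) := by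
    have := auxE n (-s)
    rwa [heven.neg_pow] at this
  have h3 : auxP n s * (s - 1) = s ^ n - 1 := geom_sum_mul s n
  have h4 : auxP n (-s) * (-s - 1) = -(s ^ n) - 1 := by
    have := geom_sum_mul (-s) n
    rwa [hodd.neg_pow] at this
  have hkey : (auxD n s * auxP n (-s) + auxP n s * auxD n (-s)) * ((1 - s) * (1 + s))
      = 2 * (auxP n s * auxP n (-s) - n * s ^ (n - 1)) := by
    linear_combination (-(1+s) * auxP n (-s)) * h1 + ((s-1) * auxP n s) * h2
      + ((n : ℝ) * s ^ (n-1)) * h3 + ((n : ℝ) * s ^ (n-1)) * h4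
  have hR : (∑ i ∈ Finset.range n, (s^2) ^ i) * (s^2 - 1) = (s ^ n) ^ 2 - 1 := by
    have := geom_sum_mul (s^2) n
    rwa [show (s^2)^n = (s^n)^2 by rw [← pow_mul, ← pow_mul, Nat.mul_comm]] at this
  have hne : s^2 - 1 ≠ 0 := by nlinarith
  have hUV : auxP n s * auxP n (-s) = ∑ i ∈ Finset.range n, (s^2) ^ i := by
    apply mul_right_cancel₀ hne
    linear_combination (-(auxP n (-s)) * (-s-1)) * h3 + (-(s^n - 1)) * h4 + (-1 : ℝ) * hR
  have hsum := aux_sum_gt k hk (s^2) (sq_nonneg s) (by nlinarith)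
  have hcast : (n : ℝ) * s ^ (n - 1) = (2 * (k:ℝ) - 1) * (s^2) ^ (k - 1) := by
    have e1 : n - 1 = 2 * (k - 1) := by omega
    rw [e1, pow_mul]
    congr 1
    push_cast [hn, Nat.cast_sub (by omega : 1 ≤ 2*k)]
    ring
  have hq : 0 < (1 - s) * (1 + s) := by nlinarith
  nlinarith [hkey, hUV, hsum, hcast]

lemma auxH_hasDeriv (k : ℕ) (hk : 2 ≤ k) (s : ℝ) (hs : s ∈ Set.Ioo (-1 : ℝ) 1) :
    HasDerivAt (fun s => auxP (2*k-1) s / auxP (2*k-1) (-s))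
      ((auxD (2*k-1) s * auxP (2*k-1) (-s) + auxP (2*k-1) s * auxD (2*k-1) (-s))
        / (auxP (2*k-1) (-s))^2) s := by
  set n := 2*k-1 with hn
  have hne : auxP n (-s) ≠ 0 := by
    refine (aux_P_pos n (by omega) (-s) ?_).ne'
    rw [abs_neg, abs_lt]; exact ⟨hs.1, hs.2⟩
  have hPneg : HasDerivAt (fun s : ℝ => auxP n (-s)) (auxD n (-s) * (-1)) s :=
    (auxP_hasDeriv n (-s)).comp s (hasDerivAt_neg s)
  have h := (auxP_hasDeriv n s).div hPneg hne
  refine h.congr_deriv ?_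
  ring

lemma auxH_mono (k : ℕ) (hk : 2 ≤ k) :
    StrictMonoOn (fun s => auxP (2*k-1) s / auxP (2*k-1) (-s)) (Set.Ioo (-1 : ℝ) 1) := by
  apply strictMonoOn_of_deriv_pos (convex_Ioo _ _)
  · intro s hs
    exact ((auxH_hasDeriv k hk s hs).continuousAt).continuousWithinAt
  · intro s hs
    rw [interior_Ioo] at hs
    rw [(auxH_hasDeriv k hk s hs).deriv]
    apply div_pos (auxW_pos k hk s hs)
    apply pow_pos
    refine aux_P_pos _ (by omega) (-s) ?_
    rw [abs_neg, abs_lt]; exact ⟨hs.1, hs.2⟩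

theorem stmt_11 (k : ℕ) (hk : 2 ≤ k) (f : ℝ → ℝ → ℝ)
    (hf : ∀ x y : ℝ, f x y =
      (∑ j ∈ Finset.range (2 * k - 1), y ^ (2 * k - 2 - j) * x ^ j) /
      (∑ j ∈ Finset.range (2 * k - 1), (-1 : ℝ) ^ j * y ^ (2 * k - 2 - j) * x ^ j))
    (y : ℝ → ℝ) (hy : ∀ x : ℝ, y x = (1 - x ^ (2 * k)) ^ ((1 : ℝ) / (2 * k)))
    (c : ℝ) (hc : c = (2 : ℝ) ^ (-(1 : ℝ) / (2 * k))) :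
    ContinuousOn (fun x => f x (y x)) (Set.Ioo (-c) c) ∧
    StrictMonoOn (fun x => f x (y x)) (Set.Ioo (-c) c) ∧
    f 0 1 = 1 ∧
    Tendsto (fun x => f x (y x)) (nhdsWithin (-c) (Set.Ioo (-c) c))
      (nhds (1 / (2 * (k : ℝ) - 1))) ∧
    Tendsto (fun x => f x (y x)) (nhdsWithin c (Set.Ioo (-c) c))
      (nhds (2 * (k : ℝ) - 1)) := by
  set S := Set.Ioo (-c) c with hS
  set n := 2 * k - 1 with hn
  have hn0 : 0 < n := by omega
  have hc_pos : 0 < c := by rw [hc]; exact rpow_pos_of_pos two_pos _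
  have hcpow : c ^ (2*k) = 1/2 := by
    rw [hc, ← Real.rpow_natCast ((2:ℝ) ^ (-(1:ℝ)/(2*k))) (2*k), ← Real.rpow_mul (by norm_num)]
    rw [show (-(1:ℝ)/(2*k)) * ((2*k : ℕ) : ℝ) = -1 by push_cast; field_simp]
    norm_num [Real.rpow_neg_one]
  have hx2k : ∀ x ∈ S, x ^ (2*k) < 1/2 := by
    intro x hx
    have hxa : |x| < c := abs_lt.mpr ⟨hx.1, hx.2⟩
    have h2 : |x| ^ (2*k) < c ^ (2*k) := pow_lt_pow_left₀ hxa (abs_nonneg x) (by omega)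
    calc x ^ (2*k) ≤ |x ^ (2*k)| := le_abs_self _
      _ = |x| ^ (2*k) := abs_pow x _
      _ < 1/2 := by rw [← hcpow]; exact h2
  have hy_pos : ∀ x ∈ S, 0 < y x := by
    intro x hx; rw [hy]
    exact rpow_pos_of_pos (by have := hx2k x hx; linarith) _
  have hypow : ∀ x ∈ S, (y x) ^ (2*k) = 1 - x ^ (2*k) := by
    intro x hx
    have hb : (0:ℝ) ≤ 1 - x ^ (2*k) := by have := hx2k x hx; linarith
    rw [hy, ← Real.rpow_natCast ((1 - x ^ (2*k)) ^ ((1:ℝ)/(2*k))) (2*k),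
      ← Real.rpow_mul hb, show ((1:ℝ)/(2*k)) * ((2*k : ℕ):ℝ) = 1 by push_cast; field_simp,
      Real.rpow_one]
  have hxy : ∀ x ∈ S, |x| < y x := by
    intro x hx
    have h1 : |x| ^ (2*k) < (y x) ^ (2*k) := by
      rw [hypow x hx, ← abs_pow x]
      rw [abs_of_nonneg (by rw [pow_mul]; positivity : (0:ℝ) ≤ x ^ (2*k))]
      have := hx2k x hx; linarith
    exact lt_of_pow_lt_pow_left₀ _ (hy_pos x hx).le h1
  -- t and its properties
  set t : ℝ → ℝ := fun x => x / y x with ht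
  have ht_mem : ∀ x ∈ S, t x ∈ Set.Ioo (-1 : ℝ) 1 := by
    intro x hx
    have h1 : |t x| < 1 := by
      rw [ht]
      simp only [abs_div, abs_of_pos (hy_pos x hx)]
      rw [div_lt_one (hy_pos x hx)]
      exact hxy x hx
    exact ⟨(abs_lt.mp h1).1, (abs_lt.mp h1).2⟩
  -- key representation
  have hterm : ∀ x ∈ S, ∀ j ∈ Finset.range n,
      (y x) ^ (2*k-2) * (t x) ^ j = (y x) ^ (2*k-2-j) * x ^ j := by
    intro x hx j hj
    simp only [Finset.mem_range] at hj
    have hY : y x ≠ 0 := (hy_pos x hx).ne'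
    have hYj : (t x) ^ j * (y x) ^ j = x ^ j := by
      rw [ht]; rw [div_pow, div_mul_cancel₀ _ (pow_ne_zero j hY)]
    have hsplit : (y x) ^ (2*k-2) = (y x) ^ (2*k-2-j) * (y x) ^ j := by
      rw [← pow_add]; congr 1; omega
    rw [hsplit, mul_assoc, mul_comm ((y x)^j), hYj]
  have hfx : ∀ x ∈ S, f x (y x) = auxP n (t x) / auxP n (-(t x)) := by
    intro x hx
    have hY : y x ≠ 0 := (hy_pos x hx).ne'
    have hnum : ∑ j ∈ Finset.range n, (y x) ^ (2*k-2-j) * x ^ j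
        = (y x) ^ (2*k-2) * auxP n (t x) := by
      rw [auxP, Finset.mul_sum]
      exact Finset.sum_congr rfl (fun j hj => (hterm x hx j hj).symm)
    have hden : ∑ j ∈ Finset.range n, (-1:ℝ) ^ j * (y x) ^ (2*k-2-j) * x ^ j
        = (y x) ^ (2*k-2) * auxP n (-(t x)) := by
      rw [auxP, Finset.mul_sum]
      apply Finset.sum_congr rfl
      intro j hj
      have h1 := hterm x hx j hj
      calc (-1:ℝ)^j * (y x)^(2*k-2-j) * x^j
          = (-1:ℝ)^j * ((y x)^(2*k-2) * (t x) ^ j) := by rw [h1]; ring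
        _ = (y x)^(2*k-2) * (-(t x))^j := by rw [neg_pow]; ring
    rw [hf, hnum, hden, mul_div_mul_left _ _ (pow_ne_zero _ hY)]
  -- t is strictly increasing on S
  have hcross : ∀ p q, p ∈ S → q ∈ S → 0 ≤ p → p < q → p * y q < q * y p := by
    intro p q hp hq hp0 hpq
    have hyq : y q < y p := by
      have h1 : p ^ (2*k) < q ^ (2*k) := pow_lt_pow_left₀ hpq hp0 (by omega)
      rw [hy, hy]
      apply Real.rpow_lt_rpow (by have := hx2k q hq; linarith) (by linarith) (by positivity)
    calc p * y q ≤ p * y p := by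
          apply mul_le_mul_of_nonneg_left hyq.le hp0
      _ < q * y p := by apply mul_lt_mul_of_pos_right hpq (hy_pos p hp)
  have hyeven : ∀ x : ℝ, y (-x) = y x := by
    intro x; rw [hy, hy, (Even.neg_pow ⟨k, by ring⟩ x : (-x)^(2*k) = x^(2*k))]
  have hSneg : ∀ x ∈ S, -x ∈ S := by
    intro x hx; exact ⟨by linarith [hx.2], by linarith [hx.1]⟩
  have ht_lt : ∀ a ∈ S, ∀ b ∈ S, a < b → t a < t b := by
    intro a ha b hb hab
    rw [ht]
    rw [div_lt_div_iff₀ (hy_pos a ha) (hy_pos b hb)]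
    rcases le_or_gt 0 a with h0a | h0a
    · exact hcross a b ha hb h0a hab
    · rcases le_or_gt b 0 with hb0 | hb0
      · have := hcross (-b) (-a) (hSneg b hb) (hSneg a ha) (by linarith) (by linarith)
        rw [hyeven, hyeven] at this
        linarith
      · have h1 : a * y b < 0 := mul_neg_of_neg_of_pos h0a (hy_pos b hb)
        have h2 : 0 < b * y a := mul_pos hb0 (hy_pos a ha)
        linarith
  -- continuity of y and t
  have hycont : Continuous y := by
    have hyf : y = fun x => (1 - x ^ (2*k)) ^ ((1:ℝ)/(2*k)) := funext hy
    rw [hyf]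
    apply Continuous.rpow_const (continuous_const.sub (continuous_pow (2*k)))
    intro x; right; positivity
  have htcont : ContinuousOn t S :=
    continuousOn_id.div hycont.continuousOn (fun x hx => (hy_pos x hx).ne')
  have hPne : ∀ x ∈ S, auxP n (-(t x)) ≠ 0 := by
    intro x hx
    refine (aux_P_pos n hn0 _ ?_).ne'
    rw [abs_neg, abs_lt]
    exact ht_mem x hx
  refine ⟨?_, ?_, ?_, ?_, ?_⟩
  -- continuity
  · apply ContinuousOn.congr (f := fun x => auxP n (t x) / auxP n (-(t x)))
    · exact ((auxP_cont n).comp_continuousOn htcont).div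
        ((auxP_cont n).comp_continuousOn htcont.neg) hPne
    · intro x hx; exact hfx x hx
  -- strict monotonicity
  · intro a ha b hb hab
    simp only
    rw [hfx a ha, hfx b hb]
    exact auxH_mono k hk (ht_mem a ha) (ht_mem b hb) (ht_lt a ha b hb hab)
  -- f 0 1 = 1
  · rw [hf]
    have h1 : ∑ j ∈ Finset.range n, (1:ℝ)^(2*k-2-j) * (0:ℝ)^j = 1 := by
      rw [Finset.sum_eq_single 0]
      · norm_num
      · intro j _ hj; simp [zero_pow hj]
      · intro h; exact absurd (Finset.mem_range.mpr (by omega)) h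
    have h2 : ∑ j ∈ Finset.range n, (-1:ℝ)^j * (1:ℝ)^(2*k-2-j) * (0:ℝ)^j = 1 := by
      rw [Finset.sum_eq_single 0]
      · norm_num
      · intro j _ hj; simp [zero_pow hj]
      · intro h; exact absurd (Finset.mem_range.mpr (by omega)) h
    rw [h1, h2]
    norm_num
  -- limits
  · -- at -c
    have hyc : y c = c := by
      have h0 : y c = ((1:ℝ)/2) ^ ((1:ℝ)/(2*k)) := by rw [hy, hcpow]; norm_num
      rw [h0, hc, show (1:ℝ)/2 = (2:ℝ)^(-1:ℝ) by
        rw [Real.rpow_neg_one]; norm_num, ← Real.rpow_mul (by norm_num : (0:ℝ) ≤ 2)]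
      congr 1; ring
    have hycn : y (-c) = c := by rw [hyeven]; exact hyc
    have hP1 : auxP n (1:ℝ) = 2*(k:ℝ) - 1 := by
      unfold auxP
      simp only [one_pow, Finset.sum_const, Finset.card_range, nsmul_eq_mul, mul_one]
      push_cast [hn, Nat.cast_sub (show 1 ≤ 2*k by omega)]
      ring
    have hPm1 : auxP n (-1:ℝ) = 1 := by
      unfold auxP
      rw [neg_one_geom_sum, if_neg (Nat.not_even_iff_odd.mpr ⟨k-1, by omega⟩)]
    have hP1ne : auxP n (1:ℝ) ≠ 0 := by
      rw [hP1]
      have : (2:ℝ) ≤ (k:ℝ) := by exact_mod_cast hk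
      intro h; linarith [h]
    have httend : Tendsto t (nhdsWithin (-c) S) (nhds (-1)) := by
      have hca : ContinuousAt t (-c) :=
        ContinuousAt.div continuousAt_id hycont.continuousAt (by rw [hycn]; exact hc_pos.ne')
      have h2 := hca.tendsto.mono_left (nhdsWithin_le_nhds (s := S))
      have htc : t (-c) = -1 := by
        show -c / y (-c) = -1
        rw [hycn, neg_div, div_self hc_pos.ne']
      rwa [htc] at h2
    have hhcont : ContinuousAt (fun s => auxP n s / auxP n (-s)) (-1) := by
      apply ContinuousAt.div ((auxP_cont n).continuousAt)
        (((auxP_cont n).comp continuous_neg).continuousAt)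
      simp only [Function.comp_apply, neg_neg]
      exact hP1ne
    have hcomp : Tendsto (fun x => auxP n (t x) / auxP n (-(t x))) (nhdsWithin (-c) S)
        (nhds (1 / (2*(k:ℝ)-1))) := by
      have h3 := hhcont.tendsto.comp httend
      rwa [show auxP n (-1:ℝ) / auxP n (-(-1:ℝ)) = 1 / (2*(k:ℝ)-1) by
        rw [neg_neg, hPm1, hP1]] at h3
    exact hcomp.congr' (Filter.eventuallyEq_of_mem self_mem_nhdsWithin
      (fun x hx => (hfx x hx).symm))
  · -- at c
    have hyc : y c = c := by
      have h0 : y c = ((1:ℝ)/2) ^ ((1:ℝ)/(2*k)) := by rw [hy, hcpow]; norm_num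
      rw [h0, hc, show (1:ℝ)/2 = (2:ℝ)^(-1:ℝ) by
        rw [Real.rpow_neg_one]; norm_num, ← Real.rpow_mul (by norm_num : (0:ℝ) ≤ 2)]
      congr 1; ring
    have hP1 : auxP n (1:ℝ) = 2*(k:ℝ) - 1 := by
      unfold auxP
      simp only [one_pow, Finset.sum_const, Finset.card_range, nsmul_eq_mul, mul_one]
      push_cast [hn, Nat.cast_sub (show 1 ≤ 2*k by omega)]
      ring
    have hPm1 : auxP n (-1:ℝ) = 1 := by
      unfold auxP
      rw [neg_one_geom_sum, if_neg (Nat.not_even_iff_odd.mpr ⟨k-1, by omega⟩)]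
    have httend : Tendsto t (nhdsWithin c S) (nhds 1) := by
      have hca : ContinuousAt t c :=
        ContinuousAt.div continuousAt_id hycont.continuousAt (by rw [hyc]; exact hc_pos.ne')
      have h2 := hca.tendsto.mono_left (nhdsWithin_le_nhds (s := S))
      have htc : t c = 1 := by
        show c / y c = 1
        rw [hyc, div_self hc_pos.ne']
      rwa [htc] at h2
    have hhcont : ContinuousAt (fun s => auxP n s / auxP n (-s)) 1 := by
      apply ContinuousAt.div ((auxP_cont n).continuousAt)
        (((auxP_cont n).comp continuous_neg).continuousAt)
      simp only [Function.comp_apply]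
      rw [hPm1]; norm_num
    have hcomp : Tendsto (fun x => auxP n (t x) / auxP n (-(t x))) (nhdsWithin c S)
        (nhds (2*(k:ℝ)-1)) := by
      have h3 := hhcont.tendsto.comp httend
      rwa [show auxP n (1:ℝ) / auxP n (-(1:ℝ)) = 2*(k:ℝ)-1 by
        rw [hPm1, hP1, div_one]] at h3
    exact hcomp.congr' (Filter.eventuallyEq_of_mem self_mem_nhdsWithin
      (fun x hx => (hfx x hx).symm))
end

section
/- In the stadium (rectangle of side lengths L and 2R capped by semicircles of radius R), the 2-periodic inverse magnetic billiard trajectory with exit/reentry points on the two semicircular caps and 0 < μ < R has α = L/μ + 2√(R² − μ²)/μ > 2√(R² − μ²)/μ = 2m, hence Tr = 2 - 4αβ + α²β² > 2 (hyperbolic). Here ℓ₁ = L + 2√(R² − μ²), cos θ = μ/R, β = 2 cot θ, m = 2/β = √(R² − μ²)/μ. -/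
open Real

theorem stmt_14 (L R μ θ ℓ₁ α β m : ℝ) (hL : 0 < L) (hR : 0 < R)
    (hμ : 0 < μ) (hμR : μ < R)
    (hθ : θ ∈ Set.Ioo 0 (π / 2)) (hcos : Real.cos θ = μ / R)
    (hℓ : ℓ₁ = L + 2 * Real.sqrt (R ^ 2 - μ ^ 2))
    (hβ : β = 2 * (Real.cos θ / Real.sin θ))
    (hm : m = Real.sqrt (R ^ 2 - μ ^ 2) / μ)
    (hα : α = ℓ₁ / μ) :
    m = 2 / β ∧ α = L / μ + 2 * m ∧ 2 * m < α ∧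
    2 < 2 - 4 * α * β + α ^ 2 * β ^ 2 := by
  obtain ⟨hθ0, hθ2⟩ := hθ
  have hsin : Real.sin θ > 0 := Real.sin_pos_of_pos_of_lt_pi hθ0 (hθ2.trans_le (by linarith [Real.pi_pos]))
  have hsq : (0:ℝ) < R ^ 2 - μ ^ 2 := by nlinarith
  have hs : Real.sqrt (R ^ 2 - μ ^ 2) > 0 := Real.sqrt_pos.mpr hsq
  have hsin_eq : Real.sin θ = Real.sqrt (R ^ 2 - μ ^ 2) / R := by
    have h1 : Real.sin θ ^ 2 = 1 - Real.cos θ ^ 2 := by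
      have := Real.sin_sq_add_cos_sq θ; linarith
    have h2 : (Real.sqrt (R ^ 2 - μ ^ 2) / R) ^ 2 = 1 - Real.cos θ ^ 2 := by
      rw [hcos, div_pow, div_pow, Real.sq_sqrt hsq.le]
      field_simp
    nlinarith [sq_nonneg (Real.sin θ - Real.sqrt (R ^ 2 - μ ^ 2) / R), div_pos hs hR]
  have hβval : β = 2 * μ / Real.sqrt (R ^ 2 - μ ^ 2) := by
    rw [hβ, hcos, hsin_eq]
    field_simp
  have hβpos : 0 < β := by rw [hβval]; positivity
  have h1 : m = 2 / β := by
    rw [hm, hβval]; field_simp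
  have h2 : α = L / μ + 2 * m := by
    rw [hα, hℓ, hm]; field_simp
  have h3 : 2 * m < α := by
    rw [h2]; have : 0 < L / μ := div_pos hL hμ; linarith
  refine ⟨h1, h2, h3, ?_⟩
  have hβm : β * m = 2 := by rw [h1]; field_simp
  have hmpos : 0 < m := by rw [hm]; positivity
  have hαβ : 4 < α * β := by nlinarith
  nlinarith [sq_nonneg (α * β)]
end

section
/- For the circle of radius R and 0 < μ < R, the equation cos θ = (3μ + √(4R² − 3μ²))/(4R) defines the unique θ ∈ (0, π/3) satisfying sin(π/3 − θ) = μ sin θ / √(R² + μ² − 2Rμ cos θ). -/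
open Real

private lemma stmt15_aux (R μ r3 q c x s d : ℝ) (hR : 0 < R) (hμ : 0 < μ)
    (hr3 : r3 ^ 2 = 3)
    (hq2 : q ^ 2 = 4 * R ^ 2 - 3 * μ ^ 2) (hq3' : 3 * μ - 2 * R < q)
    (hcdef : c = (3 * μ + q) / (4 * R))
    (hxh : 1 / 2 < x) (hd0 : 0 < d)
    (e1 : s ^ 2 + x ^ 2 = 1) (e2 : d ^ 2 = R ^ 2 + μ ^ 2 - 2 * R * μ * x)
    (e3 : d * (r3 * x - s) = 2 * (μ * s))
    (e4 : d * (x + r3 * s) = 2 * (R - μ * x)) : x = c := by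
  have hRne : (R : ℝ) ≠ 0 := ne_of_gt hR
  have hI : x * (2 * d + μ) = r3 * μ * s + R := by
    linear_combination (r3 / 2) * e3 + (1 / 2) * e4 - (d * x / 2) * hr3
  have hII : s * (2 * d + μ) = r3 * (R - μ * x) := by
    linear_combination (-1 / 2) * e3 + (r3 / 2) * e4 - (d * s / 2) * hr3
  have hS : 2 * s * (d ^ 2 + μ * d + μ ^ 2) = r3 * R * d := by
    linear_combination (-(r3 * μ) / 2) * hI + ((2 * d + μ) / 2) * hII - (μ ^ 2 * s / 2) * hr3
  have hVI : 2 * r3 * μ * R * s = d ^ 2 + 4 * d * μ + μ ^ 2 - R ^ 2 := by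
    linear_combination (-(x * (2 * d + μ) + (r3 * μ * s + R))) * hI
      + (-(s * (2 * d + μ) + r3 * (R - μ * x))) * hII
      + (-R ^ 2 - s ^ 2 * μ ^ 2 + 2 * x * μ * R - x ^ 2 * μ ^ 2) * hr3
      + (-2 * μ ^ 2 + 4 * d * μ + 4 * d ^ 2) * e1 + 3 * e2
  have hG : (d ^ 2 + μ * d + μ ^ 2 - R ^ 2) * (d ^ 2 + 4 * μ * d + μ ^ 2) = 0 := by
    linear_combination (-(d ^ 2 + μ * d + μ ^ 2)) * hVI + (r3 * μ * R) * hS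
      + (μ * R ^ 2 * d) * hr3
  have hN : d ^ 2 + μ * d + μ ^ 2 - R ^ 2 = 0 := by
    rcases mul_eq_zero.1 hG with h | h
    · exact h
    · nlinarith
  have hRfac : R * (2 * R * s - r3 * d) = 0 := by
    linear_combination hS - 2 * s * hN
  have h2Rs : 2 * R * s - r3 * d = 0 := by
    rcases mul_eq_zero.1 hRfac with h | h
    · exact absurd h hRne
    · exact h
  have hQ : 4 * R ^ 2 * x ^ 2 - 6 * R * μ * x + 3 * μ ^ 2 - R ^ 2 = 0 := by
    linear_combination (-(2 * R * s + r3 * d)) * h2Rs - d ^ 2 * hr3 + 4 * R ^ 2 * e1 - 3 * e2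
  have hQc : 4 * R ^ 2 * c ^ 2 - 6 * R * μ * c + 3 * μ ^ 2 - R ^ 2 = 0 := by
    rw [hcdef]
    field_simp
    linear_combination hq2
  have hfac : (x - c) * (4 * R ^ 2 * (x + c) - 6 * R * μ) = 0 := by
    linear_combination hQ - hQc
  have h4Rc : 4 * R ^ 2 * c = R * (3 * μ + q) := by
    rw [hcdef]; field_simp
  have hposf : 0 < 4 * R ^ 2 * (x + c) - 6 * R * μ := by nlinarith
  rcases mul_eq_zero.1 hfac with h | h
  · exact sub_eq_zero.1 h
  · linarith

set_option maxHeartbeats 1000000 in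
theorem stmt_15 (R μ : ℝ) (hR : 0 < R) (hμ : 0 < μ) (hμR : μ < R) :
    ∃ θ : ℝ, (θ ∈ Set.Ioo 0 (π / 3) ∧
        Real.sin (π / 3 - θ) =
          μ * Real.sin θ / Real.sqrt (R ^ 2 + μ ^ 2 - 2 * R * μ * Real.cos θ) ∧
        Real.cos θ = (3 * μ + Real.sqrt (4 * R ^ 2 - 3 * μ ^ 2)) / (4 * R)) ∧
      ∀ θ' ∈ Set.Ioo 0 (π / 3),
        Real.sin (π / 3 - θ') =
          μ * Real.sin θ' / Real.sqrt (R ^ 2 + μ ^ 2 - 2 * R * μ * Real.cos θ') →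
        θ' = θ := by
  have hRne : (R : ℝ) ≠ 0 := ne_of_gt hR
  have hr3 : (Real.sqrt 3) ^ 2 = 3 := Real.sq_sqrt (by norm_num)
  have hr3pos : 0 < Real.sqrt 3 := Real.sqrt_pos.2 (by norm_num)
  obtain ⟨q, hqdef⟩ : ∃ q : ℝ, q = Real.sqrt (4 * R ^ 2 - 3 * μ ^ 2) := ⟨_, rfl⟩
  have hq2 : q ^ 2 = 4 * R ^ 2 - 3 * μ ^ 2 := by
    rw [hqdef]; exact Real.sq_sqrt (by nlinarith)
  have hqpos : 0 < q := by rw [hqdef]; exact Real.sqrt_pos.2 (by nlinarith)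
  have hμq : μ < q := by nlinarith
  have hq3 : 2 * R - 3 * μ < q := by
    by_contra h
    push_neg at h
    nlinarith
  have hq3' : 3 * μ - 2 * R < q := by
    by_contra h
    push_neg at h
    nlinarith
  have hq4 : q < 4 * R - 3 * μ := by
    by_contra h
    push_neg at h
    nlinarith [sq_nonneg (R - μ)]
  obtain ⟨c, hcdef⟩ : ∃ c : ℝ, c = (3 * μ + q) / (4 * R) := ⟨_, rfl⟩
  have hc_half : 1 / 2 < c := by
    rw [hcdef, lt_div_iff₀ (by linarith)]
    linarith
  have hc1 : c < 1 := by
    rw [hcdef, div_lt_one (by linarith)]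
    linarith
  have hcos : Real.cos (Real.arccos c) = c := Real.cos_arccos (by linarith) hc1.le
  have hθmem : Real.arccos c ∈ Set.Ioo 0 (π / 3) := by
    constructor
    · exact Real.arccos_pos.2 hc1
    · by_contra h
      push_neg at h
      have h1 : Real.cos (Real.arccos c) ≤ Real.cos (π / 3) := by
        rcases eq_or_lt_of_le h with h' | h'
        · rw [h']
        · exact le_of_lt (Real.strictAntiOn_cos
            ⟨by positivity, by linarith [Real.pi_pos]⟩
            ⟨Real.arccos_nonneg _, Real.arccos_le_pi _⟩ h')
      rw [Real.cos_pi_div_three, hcos] at h1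
      linarith
  have hqμnn : (0 : ℝ) ≤ (q - μ) / 2 := by linarith
  have hsin : Real.sin (Real.arccos c) = Real.sqrt 3 * (q - μ) / (4 * R) := by
    rw [Real.sin_arccos]
    rw [show 1 - c ^ 2 = (Real.sqrt 3 * (q - μ) / (4 * R)) ^ 2 by
      rw [hcdef]
      field_simp
      ring_nf
      linear_combination (-4) * hq2 + (2 * μ * q - μ ^ 2 - q ^ 2) * hr3]
    exact Real.sqrt_sq
      (div_nonneg (mul_nonneg hr3pos.le (by linarith)) (by linarith))
  have harg : R ^ 2 + μ ^ 2 - 2 * R * μ * c = ((q - μ) / 2) ^ 2 := by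
    rw [hcdef]
    field_simp
    linear_combination (-4) * hq2
  refine ⟨Real.arccos c, ⟨hθmem, ?_, by rw [hcos, hcdef, hqdef]⟩, ?_⟩
  · -- the equation holds at θ
    rw [Real.sin_sub, Real.sin_pi_div_three, Real.cos_pi_div_three, hcos, hsin,
      harg, Real.sqrt_sq hqμnn, hcdef]
    have hqμne : q - μ ≠ 0 := by linarith
    field_simp
    ring_nf
  · -- uniqueness
    intro θ' hθ' heq
    obtain ⟨hθ'0, hθ'3⟩ := hθ'
    have hπ : 0 < π := Real.pi_pos
    have hs0 : 0 < Real.sin θ' := Real.sin_pos_of_pos_of_lt_pi hθ'0 (by linarith)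
    have hx1 : Real.cos θ' < 1 := by
      have := Real.strictAntiOn_cos (Set.mem_Icc.2 ⟨le_refl 0, hπ.le⟩)
        (Set.mem_Icc.2 ⟨hθ'0.le, by linarith⟩) hθ'0
      simpa using this
    have hxh : 1 / 2 < Real.cos θ' := by
      have := Real.strictAntiOn_cos (Set.mem_Icc.2 ⟨hθ'0.le, by linarith⟩)
        (Set.mem_Icc.2 ⟨by positivity, by linarith⟩) hθ'3
      rw [Real.cos_pi_div_three] at this
      linarith
    have e1 : Real.sin θ' ^ 2 + Real.cos θ' ^ 2 = 1 := Real.sin_sq_add_cos_sq θ'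
    have hP : 0 < R ^ 2 + μ ^ 2 - 2 * R * μ * Real.cos θ' := by
      nlinarith [mul_pos (mul_pos hR hμ) (sub_pos.2 hx1), sq_nonneg (R - μ)]
    have hd0 : 0 < Real.sqrt (R ^ 2 + μ ^ 2 - 2 * R * μ * Real.cos θ') :=
      Real.sqrt_pos.2 hP
    have hdne : Real.sqrt (R ^ 2 + μ ^ 2 - 2 * R * μ * Real.cos θ') ≠ 0 :=
      ne_of_gt hd0
    have e2 : Real.sqrt (R ^ 2 + μ ^ 2 - 2 * R * μ * Real.cos θ') ^ 2 =
        R ^ 2 + μ ^ 2 - 2 * R * μ * Real.cos θ' := Real.sq_sqrt hP.le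
    rw [eq_div_iff hdne] at heq
    -- heq : sin (π/3 - θ') * d = μ * sin θ'
    have hRμx : 0 < R - μ * Real.cos θ' := by
      nlinarith [mul_pos hμ (sub_pos.2 hx1)]
    have hA0 : 0 ≤ Real.cos (π / 3 - θ') := by
      apply Real.cos_nonneg_of_neg_pi_div_two_le_of_le
      · linarith
      · linarith
    have hA2 : Real.cos (π / 3 - θ') ^ 2 *
        Real.sqrt (R ^ 2 + μ ^ 2 - 2 * R * μ * Real.cos θ') ^ 2 =
        Real.sqrt (R ^ 2 + μ ^ 2 - 2 * R * μ * Real.cos θ') ^ 2 -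
          (μ * Real.sin θ') ^ 2 := by
      have h1 := Real.sin_sq_add_cos_sq (π / 3 - θ')
      linear_combination Real.sqrt (R ^ 2 + μ ^ 2 - 2 * R * μ * Real.cos θ') ^ 2 * h1
        - (Real.sin (π / 3 - θ') * Real.sqrt (R ^ 2 + μ ^ 2 - 2 * R * μ * Real.cos θ')
            + μ * Real.sin θ') * heq
    have hcosφ : Real.cos (π / 3 - θ') = (R - μ * Real.cos θ') /
        Real.sqrt (R ^ 2 + μ ^ 2 - 2 * R * μ * Real.cos θ') := by
      have hB0 : 0 ≤ (R - μ * Real.cos θ') /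
          Real.sqrt (R ^ 2 + μ ^ 2 - 2 * R * μ * Real.cos θ') := by positivity
      have hAB : Real.cos (π / 3 - θ') ^ 2 = ((R - μ * Real.cos θ') /
          Real.sqrt (R ^ 2 + μ ^ 2 - 2 * R * μ * Real.cos θ')) ^ 2 := by
        rw [div_pow, eq_div_iff (pow_ne_zero 2 hdne)]
        linear_combination hA2 + e2 - μ ^ 2 * e1
      have hz : (Real.cos (π / 3 - θ') - (R - μ * Real.cos θ') /
            Real.sqrt (R ^ 2 + μ ^ 2 - 2 * R * μ * Real.cos θ')) *
          (Real.cos (π / 3 - θ') + (R - μ * Real.cos θ') /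
            Real.sqrt (R ^ 2 + μ ^ 2 - 2 * R * μ * Real.cos θ')) = 0 := by
        linear_combination hAB
      rcases mul_eq_zero.1 hz with h | h
      · linarith [sub_eq_zero.1 h]
      · linarith
    rw [eq_div_iff hdne] at hcosφ
    rw [Real.cos_sub, Real.cos_pi_div_three, Real.sin_pi_div_three] at hcosφ
    rw [Real.sin_sub, Real.sin_pi_div_three, Real.cos_pi_div_three] at heq
    have e3 : Real.sqrt (R ^ 2 + μ ^ 2 - 2 * R * μ * Real.cos θ') *
        (Real.sqrt 3 * Real.cos θ' - Real.sin θ') = 2 * (μ * Real.sin θ') := by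
      linear_combination 2 * heq
    have e4 : Real.sqrt (R ^ 2 + μ ^ 2 - 2 * R * μ * Real.cos θ') *
        (Real.cos θ' + Real.sqrt 3 * Real.sin θ') = 2 * (R - μ * Real.cos θ') := by
      linear_combination 2 * hcosφ
    have hxc : Real.cos θ' = c :=
      stmt15_aux R μ (Real.sqrt 3) q c (Real.cos θ') (Real.sin θ')
        (Real.sqrt (R ^ 2 + μ ^ 2 - 2 * R * μ * Real.cos θ'))
        hR hμ hr3 hq2 hq3' hcdef hxh hd0 e1 e2 e3 e4
    exact Real.injOn_cos ⟨hθ'0.le, by linarith⟩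
      ⟨Real.arccos_nonneg _, Real.arccos_le_pi _⟩ (by rw [hxc, hcos])
end
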